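/- Let Ŵ : ℝⁿ → ℂ be an L¹ function, f̂ a Schwartz function on ℝⁿ, and q₁, q₂ ∈ ℝⁿ. Define H(R) := ∫ Ŵ(k/R + q₁) · f̂(k) · f̂(-k - R(q₁+q₂)) dk. If q₁ + q₂ ≠ 0 then H(R) → 0 as R → ∞; if q₁ + q₂ = 0 and Ŵ is additionally continuous at q₁, then H(R) → Ŵ(q₁) · ∫ f̂(k) f̂(-k) dk. -/

import Mathlib

open MeasureTheory Filter Topology

private lemma qaux_int_norm_comp {n : ℕ} (W : EuclideanSpace ℝ (Fin n) → ℂ)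
    (q : EuclideanSpace ℝ (Fin n)) {R : ℝ} (hR : R ≠ 0) :
    ∫ k : EuclideanSpace ℝ (Fin n), ‖W (R⁻¹ • k + q)‖ = |R| ^ n * ∫ u, ‖W u‖ := by
  have h1 := Measure.integral_comp_smul (μ := (volume : Measure (EuclideanSpace ℝ (Fin n))))
      (fun u => ‖W (u + q)‖) R⁻¹
  calc ∫ k : EuclideanSpace ℝ (Fin n), ‖W (R⁻¹ • k + q)‖
      = |((R⁻¹) ^ n)⁻¹| • ∫ u : EuclideanSpace ℝ (Fin n), ‖W (u + q)‖ := by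
        simpa [finrank_euclideanSpace_fin] using h1
    _ = |R| ^ n * ∫ u, ‖W u‖ := by
        rw [integral_add_right_eq_self (fun u => ‖W u‖) q, smul_eq_mul, inv_pow, inv_inv, abs_pow]

private lemma qaux_integrable {n : ℕ} {W : EuclideanSpace ℝ (Fin n) → ℂ}
    (hW : Integrable W) (q : EuclideanSpace ℝ (Fin n)) {R : ℝ} (hR : R ≠ 0) :
    Integrable (fun k : EuclideanSpace ℝ (Fin n) => W (R⁻¹ • k + q)) :=
  (hW.comp_add_right q).comp_smul (inv_ne_zero hR)

set_option maxHeartbeats 2000000 in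
/-- Limit of the two-point function of `q`-mode fluctuation operators:
`H(R) = ∫ Ŵ(k/R + q₁) f̂(k) f̂(-k - R(q₁+q₂)) dk` tends to `0` when `q₁ + q₂ ≠ 0`,
and to `Ŵ(q₁) ∫ f̂(k) f̂(-k) dk` when `q₁ + q₂ = 0` and `Ŵ` is continuous at `q₁`. -/
theorem qmode_two_point_limit (n : ℕ)
    (What : EuclideanSpace ℝ (Fin n) → ℂ) (hW : Integrable What)
    (fhat : SchwartzMap (EuclideanSpace ℝ (Fin n)) ℂ)
    (q₁ q₂ : EuclideanSpace ℝ (Fin n)) :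
    (q₁ + q₂ ≠ 0 → Tendsto (fun R : ℝ =>
        ∫ k, What (R⁻¹ • k + q₁) * fhat k * fhat (-k - R • (q₁ + q₂)))
      atTop (𝓝 0)) ∧
    (q₁ + q₂ = 0 → ContinuousAt What q₁ → Tendsto (fun R : ℝ =>
        ∫ k, What (R⁻¹ • k + q₁) * fhat k * fhat (-k - R • (q₁ + q₂)))
      atTop (𝓝 (What q₁ * ∫ k, fhat k * fhat (-k)))) := by
  have hC₀nn : (0:ℝ) ≤ SchwartzMap.seminorm ℝ 0 0 fhat := apply_nonneg _ _
  set C₀ : ℝ := SchwartzMap.seminorm ℝ 0 0 fhat with hC₀def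
  have hfb : ∀ x, ‖fhat x‖ ≤ C₀ := fun x => fhat.norm_le_seminorm ℝ x
  have hW₁nn : (0:ℝ) ≤ ∫ u, ‖What u‖ := integral_nonneg fun u => norm_nonneg _
  constructor
  · -- case q₁ + q₂ ≠ 0
    intro hv
    set v := q₁ + q₂ with hvdef
    have hvn : (0:ℝ) < ‖v‖ := norm_pos_iff.2 hv
    have hvne : ‖v‖ ≠ 0 := ne_of_gt hvn
    have hCnn : (0:ℝ) ≤ SchwartzMap.seminorm ℝ (n+1) 0 fhat := apply_nonneg _ _
    set C : ℝ := SchwartzMap.seminorm ℝ (n+1) 0 fhat with hCdef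
    have hdecay : ∀ x, ‖x‖ ^ (n+1) * ‖fhat x‖ ≤ C :=
      fun x => fhat.norm_pow_mul_le_seminorm ℝ (n+1) x
    have hbound : ∀ R : ℝ, 1 ≤ R →
        ‖∫ k, What (R⁻¹ • k + q₁) * fhat k * fhat (-k - R • v)‖ ≤
          (C * C₀ * (∫ u, ‖What u‖) * 2 ^ (n+1) / ‖v‖ ^ (n+1)) / R := by
      intro R hR1
      have hRpos : (0:ℝ) < R := lt_of_lt_of_le one_pos hR1
      have hRne : R ≠ 0 := ne_of_gt hRpos
      have hapos : (0:ℝ) < R * ‖v‖ / 2 := by positivity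
      have hsmall : ∀ x : EuclideanSpace ℝ (Fin n), R * ‖v‖ / 2 ≤ ‖x‖ →
          ‖fhat x‖ ≤ C / (R * ‖v‖ / 2) ^ (n+1) := by
        intro x hx
        rw [le_div_iff₀ (by positivity)]
        calc ‖fhat x‖ * (R * ‖v‖ / 2) ^ (n+1)
            ≤ ‖fhat x‖ * ‖x‖ ^ (n+1) := by
              gcongr
          _ = ‖x‖ ^ (n+1) * ‖fhat x‖ := mul_comm _ _
          _ ≤ C := hdecay x
      have hptwise : ∀ k, ‖What (R⁻¹ • k + q₁) * fhat k * fhat (-k - R • v)‖ ≤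
          ‖What (R⁻¹ • k + q₁)‖ * (C / (R * ‖v‖ / 2) ^ (n+1) * C₀) := by
        intro k
        rw [norm_mul, norm_mul, mul_assoc]
        refine mul_le_mul_of_nonneg_left ?_ (norm_nonneg _)
        have hcases : R * ‖v‖ / 2 ≤ ‖k‖ ∨ R * ‖v‖ / 2 ≤ ‖k + R • v‖ := by
          by_contra h
          push_neg at h
          have h2 : R * ‖v‖ ≤ ‖k + R • v‖ + ‖k‖ := by
            calc R * ‖v‖ = ‖R • v‖ := by
                  rw [norm_smul, Real.norm_eq_abs, abs_of_pos hRpos]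
              _ = ‖(k + R • v) - k‖ := by rw [add_sub_cancel_left]
              _ ≤ ‖k + R • v‖ + ‖k‖ := norm_sub_le _ _
          linarith [h.1, h.2]
        rcases hcases with h | h
        · exact mul_le_mul (hsmall k h) (hfb _) (norm_nonneg _) (by positivity)
        · have h' : R * ‖v‖ / 2 ≤ ‖-k - R • v‖ := by
            rw [show (-k - R • v : EuclideanSpace ℝ (Fin n)) = -(k + R • v) by abel, norm_neg]
            exact h
          calc ‖fhat k‖ * ‖fhat (-k - R • v)‖
              ≤ C₀ * (C / (R * ‖v‖ / 2) ^ (n+1)) :=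
                mul_le_mul (hfb _) (hsmall _ h') (norm_nonneg _) hC₀nn
            _ = C / (R * ‖v‖ / 2) ^ (n+1) * C₀ := mul_comm _ _
      have hint : Integrable (fun k : EuclideanSpace ℝ (Fin n) =>
          ‖What (R⁻¹ • k + q₁)‖ * (C / (R * ‖v‖ / 2) ^ (n+1) * C₀)) :=
        ((qaux_integrable hW q₁ hRne).norm).mul_const _
      refine (norm_integral_le_of_norm_le hint (ae_of_all _ hptwise)).trans ?_
      rw [integral_mul_const, qaux_int_norm_comp What q₁ hRne, abs_of_pos hRpos]
      refine le_of_eq ?_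
      rw [div_pow, mul_pow]
      field_simp
      ring
    rw [tendsto_zero_iff_norm_tendsto_zero]
    refine squeeze_zero' (Eventually.of_forall fun _ => norm_nonneg _)
      (eventually_atTop.2 ⟨1, hbound⟩) ?_
    exact tendsto_const_nhds.div_atTop tendsto_id
  · -- case q₁ + q₂ = 0
    intro hv hcont
    simp only [hv, smul_zero, sub_zero]
    -- basic integrability facts
    have hgmeas : AEStronglyMeasurable (fun k : EuclideanSpace ℝ (Fin n) => fhat k * fhat (-k))
        volume :=
      (fhat.continuous.mul (fhat.continuous.comp continuous_neg)).aestronglyMeasurable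
    have hgb : ∀ k : EuclideanSpace ℝ (Fin n), ‖fhat k * fhat (-k)‖ ≤ C₀ * C₀ := by
      intro k
      rw [norm_mul]
      exact mul_le_mul (hfb _) (hfb _) (norm_nonneg _) hC₀nn
    have hgint : Integrable (fun k : EuclideanSpace ℝ (Fin n) => fhat k * fhat (-k)) := by
      have h := (fhat.integrable (μ := volume)).bdd_mul
        ((fhat.continuous.comp continuous_neg).aestronglyMeasurable) (ae_of_all _ fun x => hfb _)
      exact h.congr (Eventually.of_forall fun k => mul_comm _ _)
    -- uniform Schwartz bound with (1 + ‖x‖) powers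
    obtain ⟨M, hMnn, hM⟩ : ∃ M : ℝ, 0 ≤ M ∧ ∀ x, (1 + ‖x‖) ^ (2*(n+1)) * ‖fhat x‖ ≤ M := by
      refine ⟨2 ^ (2*(n+1)) *
        (Finset.Iic ((2*(n+1), 0) : ℕ × ℕ)).sup (fun m => SchwartzMap.seminorm ℝ m.1 m.2) fhat,
        mul_nonneg (by positivity) (apply_nonneg _ _), fun x => ?_⟩
      have h := SchwartzMap.one_add_le_sup_seminorm_apply (𝕜 := ℝ)
        (m := ((2*(n+1), 0) : ℕ × ℕ)) (k := 2*(n+1)) (n := 0) le_rfl le_rfl fhat x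
      simpa [norm_iteratedFDeriv_zero] using h
    -- integrability of (1 + ‖k‖)⁻¹ powers
    have hJint : Integrable (fun k : EuclideanSpace ℝ (Fin n) => (((1:ℝ) + ‖k‖) ^ (n+1))⁻¹) := by
      have h := integrable_one_add_norm (E := EuclideanSpace ℝ (Fin n)) (μ := volume)
        (r := (n:ℝ)+1) (by rw [finrank_euclideanSpace_fin]; linarith)
      refine h.congr (Eventually.of_forall fun x => ?_)
      have hx : ((1:ℝ) + ‖x‖) ^ (-((n:ℝ)+1)) = (((1:ℝ) + ‖x‖) ^ (n+1))⁻¹ := by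
        rw [show -((n:ℝ)+1) = -(((n+1 : ℕ)):ℝ) by push_cast; ring,
          Real.rpow_neg (by positivity), Real.rpow_natCast]
      simpa using hx
    have hJnn : (0:ℝ) ≤ ∫ k : EuclideanSpace ℝ (Fin n), (((1:ℝ) + ‖k‖) ^ (n+1))⁻¹ :=
      integral_nonneg fun k => by positivity
    have hW₀nn : (0:ℝ) ≤ ‖What q₁‖ := norm_nonneg _
    rw [Metric.tendsto_atTop]
    intro ε hε
    have hIgnn : (0:ℝ) ≤ ∫ k : EuclideanSpace ℝ (Fin n), ‖fhat k * fhat (-k)‖ :=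
      integral_nonneg fun _ => norm_nonneg _
    set Ig : ℝ := ∫ k : EuclideanSpace ℝ (Fin n), ‖fhat k * fhat (-k)‖ with hIgdef
    set ε' : ℝ := ε / (2 * (Ig + 1)) with hε'def
    have hε'pos : 0 < ε' := by
      rw [hε'def]
      exact div_pos hε (by linarith)
    obtain ⟨δ, hδpos, hδ⟩ := Metric.continuousAt_iff.1 hcont ε' hε'pos
    set W₁ : ℝ := ∫ u, ‖What u‖ with hW₁def
    set J : ℝ := ∫ k : EuclideanSpace ℝ (Fin n), (((1:ℝ) + ‖k‖) ^ (n+1))⁻¹ with hJdef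
    set W₀ : ℝ := ‖What q₁‖ with hW₀def
    set K : ℝ := M * C₀ * (W₁ + W₀ * J) / δ ^ (n+1) with hKdef
    have hKR : Tendsto (fun R : ℝ => K / R) atTop (𝓝 0) :=
      tendsto_const_nhds.div_atTop tendsto_id
    obtain ⟨R₁, hR₁⟩ := eventually_atTop.1
      (hKR.eventually_lt_const (show (0:ℝ) < ε/2 by positivity))
    refine ⟨max 1 R₁, fun R hR => ?_⟩
    have hR1 : (1:ℝ) ≤ R := le_trans (le_max_left _ _) hR
    have hRpos : (0:ℝ) < R := lt_of_lt_of_le one_pos hR1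
    have hRne : R ≠ 0 := ne_of_gt hRpos
    have hRn1 : (1:ℝ) ≤ R ^ n := by
      have := pow_le_pow_left₀ (by norm_num : (0:ℝ) ≤ 1) hR1 n
      simpa using this
    have hWRint : Integrable (fun k : EuclideanSpace ℝ (Fin n) => What (R⁻¹ • k + q₁)) :=
      qaux_integrable hW q₁ hRne
    have hint1 : Integrable (fun k : EuclideanSpace ℝ (Fin n) =>
        What (R⁻¹ • k + q₁) * (fhat k * fhat (-k))) := by
      have h := hWRint.bdd_mul hgmeas (ae_of_all _ hgb)
      exact h.congr (Eventually.of_forall fun k => mul_comm _ _)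
    have hint2 : Integrable (fun k : EuclideanSpace ℝ (Fin n) =>
        What q₁ * (fhat k * fhat (-k))) := hgint.const_mul _
    set P : ℝ := (1 + δ * R) ^ (n+1) with hPdef
    have hPpos : (0:ℝ) < P := by positivity
    -- pointwise bound
    have hpt : ∀ k : EuclideanSpace ℝ (Fin n),
        ‖(What (R⁻¹ • k + q₁) - What q₁) * (fhat k * fhat (-k))‖ ≤
          ε' * ‖fhat k * fhat (-k)‖ +
            M * C₀ / P * (‖What (R⁻¹ • k + q₁)‖ + W₀ * (((1:ℝ) + ‖k‖) ^ (n+1))⁻¹) := by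
      intro k
      rw [norm_mul]
      by_cases hcase : dist (R⁻¹ • k + q₁) q₁ < δ
      · have h1 : ‖What (R⁻¹ • k + q₁) - What q₁‖ < ε' := by
          rw [← dist_eq_norm]; exact hδ hcase
        have h2 : ‖What (R⁻¹ • k + q₁) - What q₁‖ * ‖fhat k * fhat (-k)‖ ≤
            ε' * ‖fhat k * fhat (-k)‖ :=
          mul_le_mul_of_nonneg_right h1.le (norm_nonneg _)
        refine h2.trans (le_add_of_nonneg_right ?_)
        exact mul_nonneg (div_nonneg (mul_nonneg hMnn hC₀nn) hPpos.le)
          (add_nonneg (norm_nonneg _) (mul_nonneg hW₀nn (by positivity)))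
      · have hk : δ * R ≤ ‖k‖ := by
          have h1 := not_lt.1 hcase
          rw [dist_eq_norm, add_sub_cancel_right, norm_smul, Real.norm_eq_abs,
            abs_of_pos (inv_pos.2 hRpos)] at h1
          calc δ * R ≤ (R⁻¹ * ‖k‖) * R := by gcongr
            _ = ‖k‖ := by field_simp
        have hQpos : (0:ℝ) < ((1:ℝ) + ‖k‖) ^ (n+1) := by positivity
        have hQ1 : (1:ℝ) ≤ ((1:ℝ) + ‖k‖) ^ (n+1) := by
          have := pow_le_pow_left₀ (by norm_num : (0:ℝ) ≤ 1)
            (by linarith [norm_nonneg k] : (1:ℝ) ≤ 1 + ‖k‖) (n+1)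
          simpa using this
        have hden : P * ((1:ℝ) + ‖k‖) ^ (n+1) ≤ (1 + ‖k‖) ^ (2*(n+1)) := by
          rw [two_mul, pow_add ((1:ℝ) + ‖k‖) (n+1) (n+1)]
          have h3 : P ≤ ((1:ℝ) + ‖k‖) ^ (n+1) :=
            pow_le_pow_left₀ (by positivity) (by linarith) _
          exact mul_le_mul_of_nonneg_right h3 (by positivity)
        have hfk : ‖fhat k‖ ≤ M / (P * ((1:ℝ) + ‖k‖) ^ (n+1)) := by
          rw [le_div_iff₀ (by positivity)]
          calc ‖fhat k‖ * (P * ((1:ℝ) + ‖k‖) ^ (n+1))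
              ≤ ‖fhat k‖ * (1 + ‖k‖) ^ (2*(n+1)) :=
                mul_le_mul_of_nonneg_left hden (norm_nonneg _)
            _ = (1 + ‖k‖) ^ (2*(n+1)) * ‖fhat k‖ := mul_comm _ _
            _ ≤ M := hM k
        have hgk : ‖fhat k * fhat (-k)‖ ≤ M / (P * ((1:ℝ) + ‖k‖) ^ (n+1)) * C₀ := by
          rw [norm_mul]
          exact mul_le_mul hfk (hfb _) (norm_nonneg _) (by positivity)
        have h4 : ‖What (R⁻¹ • k + q₁) - What q₁‖ * ‖fhat k * fhat (-k)‖ ≤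
            (‖What (R⁻¹ • k + q₁)‖ + W₀) * (M / (P * ((1:ℝ) + ‖k‖) ^ (n+1)) * C₀) :=
          mul_le_mul (norm_sub_le _ _) hgk (norm_nonneg _)
            (by exact add_nonneg (norm_nonneg _) hW₀nn)
        have h5 : (‖What (R⁻¹ • k + q₁)‖ + W₀) * (M / (P * ((1:ℝ) + ‖k‖) ^ (n+1)) * C₀) =
            M * C₀ / P * (‖What (R⁻¹ • k + q₁)‖ * (((1:ℝ) + ‖k‖) ^ (n+1))⁻¹ +
              W₀ * (((1:ℝ) + ‖k‖) ^ (n+1))⁻¹) := by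
          field_simp
        have h6 : ‖What (R⁻¹ • k + q₁)‖ * (((1:ℝ) + ‖k‖) ^ (n+1))⁻¹ ≤
            ‖What (R⁻¹ • k + q₁)‖ := by
          have h7 : (((1:ℝ) + ‖k‖) ^ (n+1))⁻¹ ≤ 1 := by
            rw [inv_le_one_iff₀]
            right
            exact hQ1
          calc ‖What (R⁻¹ • k + q₁)‖ * (((1:ℝ) + ‖k‖) ^ (n+1))⁻¹
              ≤ ‖What (R⁻¹ • k + q₁)‖ * 1 :=
                mul_le_mul_of_nonneg_left h7 (norm_nonneg _)
            _ = ‖What (R⁻¹ • k + q₁)‖ := mul_one _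
        calc ‖What (R⁻¹ • k + q₁) - What q₁‖ * ‖fhat k * fhat (-k)‖
            ≤ M * C₀ / P * (‖What (R⁻¹ • k + q₁)‖ * (((1:ℝ) + ‖k‖) ^ (n+1))⁻¹ +
              W₀ * (((1:ℝ) + ‖k‖) ^ (n+1))⁻¹) := by rw [← h5]; exact h4
          _ ≤ M * C₀ / P * (‖What (R⁻¹ • k + q₁)‖ + W₀ * (((1:ℝ) + ‖k‖) ^ (n+1))⁻¹) := by
              refine mul_le_mul_of_nonneg_left ?_
                (div_nonneg (mul_nonneg hMnn hC₀nn) hPpos.le)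
              exact add_le_add h6 le_rfl
          _ ≤ ε' * ‖fhat k * fhat (-k)‖ +
              M * C₀ / P * (‖What (R⁻¹ • k + q₁)‖ + W₀ * (((1:ℝ) + ‖k‖) ^ (n+1))⁻¹) := by
              exact le_add_of_nonneg_left (mul_nonneg hε'pos.le (norm_nonneg _))
    -- integrability of the majorant
    have hφint : Integrable (fun k : EuclideanSpace ℝ (Fin n) =>
        ε' * ‖fhat k * fhat (-k)‖ +
          M * C₀ / P * (‖What (R⁻¹ • k + q₁)‖ + W₀ * (((1:ℝ) + ‖k‖) ^ (n+1))⁻¹)) :=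
      (hgint.norm.const_mul ε').add
        ((hWRint.norm.add (hJint.const_mul W₀)).const_mul (M * C₀ / P))
    -- the difference of integrals
    have hdiff : (∫ k, What (R⁻¹ • k + q₁) * fhat k * fhat (-k)) -
        What q₁ * ∫ k, fhat k * fhat (-k) =
        ∫ k, (What (R⁻¹ • k + q₁) - What q₁) * (fhat k * fhat (-k)) := by
      rw [show (∫ k, What (R⁻¹ • k + q₁) * fhat k * fhat (-k)) =
          ∫ k, What (R⁻¹ • k + q₁) * (fhat k * fhat (-k)) by simp only [mul_assoc]]
      rw [← integral_const_mul, ← integral_sub hint1 hint2]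
      simp only [sub_mul]
    have hnormle : ‖(∫ k, What (R⁻¹ • k + q₁) * fhat k * fhat (-k)) -
        What q₁ * ∫ k, fhat k * fhat (-k)‖ ≤
        ε' * Ig + M * C₀ / P * ((|R| ^ n * W₁) + W₀ * J) := by
      rw [hdiff]
      have h := norm_integral_le_of_norm_le hφint (ae_of_all _ hpt)
      refine h.trans (le_of_eq ?_)
      have hφ2 : Integrable (fun k : EuclideanSpace ℝ (Fin n) =>
          M * C₀ / P * (‖What (R⁻¹ • k + q₁)‖ + W₀ * (((1:ℝ) + ‖k‖) ^ (n+1))⁻¹)) :=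
        (hWRint.norm.add (hJint.const_mul W₀)).const_mul (M * C₀ / P)
      have hφ3 : Integrable (fun k : EuclideanSpace ℝ (Fin n) =>
          ‖What (R⁻¹ • k + q₁)‖ + W₀ * (((1:ℝ) + ‖k‖) ^ (n+1))⁻¹) :=
        hWRint.norm.add (hJint.const_mul W₀)
      rw [integral_add (hgint.norm.const_mul ε') hφ2, integral_const_mul, integral_const_mul,
        integral_add hWRint.norm (hJint.const_mul W₀), integral_const_mul,
        qaux_int_norm_comp What q₁ hRne]
    have hterm : M * C₀ / P * ((|R| ^ n * W₁) + W₀ * J) ≤ K / R := by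
      rw [abs_of_pos hRpos]
      have hP : δ ^ (n+1) * R ^ (n+1) ≤ P := by
        calc δ ^ (n+1) * R ^ (n+1) = (δ * R) ^ (n+1) := (mul_pow _ _ _).symm
          _ ≤ (1 + δ * R) ^ (n+1) := pow_le_pow_left₀ (by positivity) (by linarith [mul_pos hδpos hRpos]) _
      rw [div_mul_eq_mul_div, div_le_div_iff₀ hPpos hRpos, hKdef]
      calc M * C₀ * (R ^ n * W₁ + W₀ * J) * R
          ≤ M * C₀ * (R ^ n * W₁ + W₀ * J * R ^ n) * R := by
            have h9 : W₀ * J ≤ W₀ * J * R ^ n :=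
              le_mul_of_one_le_right (mul_nonneg hW₀nn hJnn) hRn1
            have h10 : R ^ n * W₁ + W₀ * J ≤ R ^ n * W₁ + W₀ * J * R ^ n := by linarith
            exact mul_le_mul_of_nonneg_right
              (mul_le_mul_of_nonneg_left h10 (mul_nonneg hMnn hC₀nn)) hRpos.le
        _ = (M * C₀ * (W₁ + W₀ * J) / δ ^ (n+1)) * (δ ^ (n+1) * R ^ (n+1)) := by
            field_simp
            ring
        _ ≤ (M * C₀ * (W₁ + W₀ * J) / δ ^ (n+1)) * P := by
            refine mul_le_mul_of_nonneg_left hP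
              (div_nonneg (mul_nonneg (mul_nonneg hMnn hC₀nn)
                (add_nonneg hW₁nn (mul_nonneg hW₀nn hJnn))) (pow_nonneg hδpos.le _))
    have hfirst : ε' * Ig < ε / 2 := by
      have heq : ε' * (Ig + 1) = ε / 2 := by
        have h8 : Ig + 1 ≠ 0 := by linarith
        rw [hε'def]
        field_simp
      nlinarith [hε'pos]
    have hsecond : K / R < ε / 2 := hR₁ R (le_trans (le_max_right _ _) hR)
    rw [dist_eq_norm]
    calc ‖(∫ k, What (R⁻¹ • k + q₁) * fhat k * fhat (-k)) -
        What q₁ * ∫ k, fhat k * fhat (-k)‖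
        ≤ ε' * Ig + M * C₀ / P * ((|R| ^ n * W₁) + W₀ * J) := hnormle
      _ ≤ ε' * Ig + K / R := by linarith [hterm]
      _ < ε / 2 + ε / 2 := by linarith [hfirst, hsecond]
      _ = ε := by ring
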